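/- Let F be a field with char(F) ≠ 2, G a non-abelian group with non-trivial orientation σ and involution *, FG normal with respect to ⊛, and N = ker(σ) an SLC-group with unique non-identity commutator s. Then there exists g₀ ∈ G \ N that centralizes N, satisfies g₀* = sg₀, and is central in G. -/

import Mathlib

/-- The oriented involution on the group algebra: `(Σ α_g g)⊛ = Σ α_g σ(g) g*`. -/
noncomputable def oinvMap {F G : Type*} [Field F] [Group G] (st : G → G) (σ : G → F) :
    MonoidAlgebra F G → MonoidAlgebra F G :=
  fun α => Finsupp.sum α.coeff fun g c => MonoidAlgebra.single (st g) (σ g * c)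

section aux
variable {F G : Type*} [Field F] [Group G]

private lemma oinv_single (st : G → G) (σ : G → F) (g : G) (c : F) :
    oinvMap st σ (MonoidAlgebra.single g c) = MonoidAlgebra.single (st g) (σ g * c) := by
  unfold oinvMap
  rw [MonoidAlgebra.coeff_single, Finsupp.sum_single_index]
  simp

private lemma oinv_add (st : G → G) (σ : G → F) (α β : MonoidAlgebra F G) :
    oinvMap st σ (α + β) = oinvMap st σ α + oinvMap st σ β := by
  classical
  unfold oinvMap
  rw [MonoidAlgebra.coeff_add]
  apply Finsupp.sum_add_index <;> simp [mul_add, MonoidAlgebra.single_add]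

set_option linter.unusedSectionVars false in
private lemma extract (h2 : (2:F) ≠ 0) {a b c d : G}
    (h : (MonoidAlgebra.single a 1 + MonoidAlgebra.single b 1 : MonoidAlgebra F G)
       = MonoidAlgebra.single c 1 + MonoidAlgebra.single d 1) :
    (a = c ∧ b = d) ∨ (a = d ∧ b = c) := by
  classical
  have h' : (Finsupp.single a 1 + Finsupp.single b 1 : G →₀ F)
       = Finsupp.single c 1 + Finsupp.single d 1 := congrArg MonoidAlgebra.coeff h
  by_cases hac : a = c
  · subst hac
    have := add_left_cancel h'
    exact Or.inl ⟨rfl, (Finsupp.single_left_inj one_ne_zero).mp this⟩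
  · by_cases had : a = d
    · subst had
      rw [add_comm (Finsupp.single c (1:F)) (Finsupp.single a 1)] at h'
      have := add_left_cancel h'
      exact Or.inr ⟨rfl, (Finsupp.single_left_inj one_ne_zero).mp this⟩
    · exfalso
      have ha := DFunLike.congr_fun h' a
      simp only [Finsupp.add_apply, Finsupp.single_apply, eq_self_iff_true, if_true] at ha
      rw [if_neg (fun hh : c = a => hac hh.symm),
        if_neg (fun hh : d = a => had hh.symm)] at ha
      by_cases hba : b = a
      · rw [if_pos hba] at ha
        exact h2 (by linear_combination ha)
      · rw [if_neg hba] at ha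
        simp at ha

private lemma key_rel (st : G → G) (σ : G → F)
    (hnormal : ∀ α : MonoidAlgebra F G, α * oinvMap st σ α = oinvMap st σ α * α)
    (x y : G) :
    (MonoidAlgebra.single (x * st y) (σ y) + MonoidAlgebra.single (y * st x) (σ x) : MonoidAlgebra F G)
      = MonoidAlgebra.single (st y * x) (σ y) + MonoidAlgebra.single (st x * y) (σ x) := by
  have hd : ∀ z : G, (MonoidAlgebra.single (z * st z) (σ z) : MonoidAlgebra F G)
      = MonoidAlgebra.single (st z * z) (σ z) := by
    intro z
    have e := hnormal (MonoidAlgebra.single z 1)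
    rw [oinv_single] at e
    simpa [MonoidAlgebra.single_mul_single] using e
  have e := hnormal (MonoidAlgebra.single x 1 + MonoidAlgebra.single y 1)
  rw [oinv_add, oinv_single, oinv_single, mul_one, mul_one] at e
  simp only [add_mul, mul_add, MonoidAlgebra.single_mul_single, one_mul, mul_one] at e
  linear_combination (norm := abel1) e - hd x - hd y

private lemma P1lem (st : G → G) (σ : G → F)
    (hnormal : ∀ α : MonoidAlgebra F G, α * oinvMap st σ α = oinvMap st σ α * α)
    (x : G) (hx : σ x ≠ 0) : x * st x = st x * x := by
  have e := hnormal (MonoidAlgebra.single x 1)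
  rw [oinv_single] at e
  simp only [MonoidAlgebra.single_mul_single, one_mul, mul_one] at e
  rcases (MonoidAlgebra.single_inj).mp e with h|h
  · exact h.1
  · exact absurd h.1 hx

private lemma P2lem (h2 : (2:F) ≠ 0) (st : G → G) (σ : G → F)
    (hnormal : ∀ α : MonoidAlgebra F G, α * oinvMap st σ α = oinvMap st σ α * α)
    (x g : G) (hx : σ x = 1) (hg : σ g = -1) :
    (g * st x = st x * g ∧ x * st g = st g * x) ∨
    (g * st x = x * st g ∧ st x * g = st g * x) := by
  have e := key_rel st σ hnormal x g
  rw [hx, hg, MonoidAlgebra.single_neg, MonoidAlgebra.single_neg] at e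
  have e' : (MonoidAlgebra.single (g * st x) 1 + MonoidAlgebra.single (st g * x) 1 : MonoidAlgebra F G)
      = MonoidAlgebra.single (st x * g) 1 + MonoidAlgebra.single (x * st g) 1 := by
    linear_combination (norm := abel1) e
  rcases extract h2 e' with ⟨u,v⟩|⟨u,v⟩
  · exact Or.inl ⟨u, v.symm⟩
  · exact Or.inr ⟨u, v.symm⟩

private lemma P3lem (h2 : (2:F) ≠ 0) (st : G → G) (σ : G → F)
    (hnormal : ∀ α : MonoidAlgebra F G, α * oinvMap st σ α = oinvMap st σ α * α)
    (x y : G) (hx : σ x = -1) (hy : σ y = -1) :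
    (x * st y = st y * x ∧ y * st x = st x * y) ∨
    (x * st y = st x * y ∧ y * st x = st y * x) := by
  have e := key_rel st σ hnormal x y
  rw [hx, hy, MonoidAlgebra.single_neg, MonoidAlgebra.single_neg, MonoidAlgebra.single_neg,
    MonoidAlgebra.single_neg] at e
  have e' : (MonoidAlgebra.single (x * st y) 1 + MonoidAlgebra.single (y * st x) 1 : MonoidAlgebra F G)
      = MonoidAlgebra.single (st y * x) 1 + MonoidAlgebra.single (st x * y) 1 := by
    linear_combination (norm := abel1) -e
  rcases extract h2 e' with ⟨u,v⟩|⟨u,v⟩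
  · exact Or.inl ⟨u, v⟩
  · exact Or.inr ⟨u, v⟩

end aux

theorem stmt_17 {F G : Type*} [Field F] [Group G] (h2 : (2 : F) ≠ 0)
    (hna : ∃ g h : G, g * h ≠ h * g)
    (st : G → G) (hanti : ∀ g h : G, st (g * h) = st h * st g)
    (hinvol : ∀ g : G, st (st g) = g)
    (σ : G → F) (hhom : ∀ g h : G, σ (g * h) = σ g * σ h)
    (hval : ∀ g : G, σ g = 1 ∨ σ g = -1)
    (hnt : ∃ g : G, σ g = -1)
    (hker : ∀ g : G, σ (g * st g) = 1)
    (hnormal : ∀ α : MonoidAlgebra F G, α * oinvMap st σ α = oinvMap st σ α * α)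
    (s : G) (hsN : σ s = 1) (hs1 : s ≠ 1) (hs2 : s * s = 1)
    (hNna : ∃ m n : G, σ m = 1 ∧ σ n = 1 ∧ m * n ≠ n * m)
    (hNLC : ∀ m n : G, σ m = 1 → σ n = 1 → (m * n = n * m ↔
      ((∀ k : G, σ k = 1 → m * k = k * m) ∨ (∀ k : G, σ k = 1 → n * k = k * n) ∨
        (∀ k : G, σ k = 1 → (m * n) * k = k * (m * n)))))
    (hNcomm : ∀ m n : G, σ m = 1 → σ n = 1 →
      (m⁻¹ * n⁻¹ * m * n = 1 ∨ m⁻¹ * n⁻¹ * m * n = s))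
    (hNcommS : ∃ m n : G, σ m = 1 ∧ σ n = 1 ∧ m⁻¹ * n⁻¹ * m * n = s)
    (hcanon : ∀ n : G, σ n = 1 →
      ((∀ k : G, σ k = 1 → n * k = k * n) → st n = n) ∧
      ((¬ ∀ k : G, σ k = 1 → n * k = k * n) → st n = s * n)) :
    ∃ g₀ : G, σ g₀ = -1 ∧ (∀ n : G, σ n = 1 → g₀ * n = n * g₀) ∧
      st g₀ = s * g₀ ∧ g₀ ∈ Subgroup.center G := by
  classical
  obtain ⟨m, n, hm, hn, hmn⟩ := hNcommS
  -- basic facts about σ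
  have h1m : (1:F) ≠ -1 := by intro h; apply h2; linear_combination h
  have hσne : ∀ g : G, σ g ≠ 0 := by
    intro g; rcases hval g with h|h <;> rw [h]
    · exact one_ne_zero
    · exact neg_ne_zero.mpr one_ne_zero
  have hσ1 : σ (1 : G) = 1 := by
    have h := hhom 1 1
    rw [mul_one] at h
    rcases hval 1 with h1|h1
    · exact h1
    · exfalso; rw [h1] at h; norm_num at h; exact h1m h.symm
  have hσst : ∀ g : G, σ (st g) = σ g := by
    intro g
    have h := hker g; rw [hhom] at h
    rcases hval g with h1|h1
    · rw [h1, one_mul] at h; rw [h1, h]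
    · rw [h1] at h
      rcases hval (st g) with h3|h3
      · exfalso; rw [h3, mul_one] at h; exact h1m h.symm
      · rw [h3, h1]
  have hσinv : ∀ g : G, σ g⁻¹ = σ g := by
    intro g
    have h := hhom g⁻¹ g
    rw [inv_mul_cancel, hσ1] at h
    rcases hval g with h1|h1 <;> rcases hval g⁻¹ with h3|h3
    · rw [h3, h1]
    · exfalso; rw [h1, h3, mul_one] at h; exact h1m h
    · exfalso; rw [h1, h3, one_mul] at h; exact h1m h
    · rw [h3, h1]
  -- commutator helpers
  have hcomm1 : ∀ a b : G, a⁻¹ * b⁻¹ * a * b = 1 → a * b = b * a := by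
    intro a b h
    have := congrArg (fun z => b * a * z) h
    simpa [mul_assoc] using this
  have hcomms : ∀ a b : G, a⁻¹ * b⁻¹ * a * b = s → a * b = b * (a * s) := by
    intro a b h
    have := congrArg (fun z => b * a * z) h
    simpa [mul_assoc] using this
  have hscent : ∀ k : G, σ k = 1 → s * k = k * s := by
    intro k hk
    rcases hNcomm s k hsN hk with h|h
    · exact hcomm1 s k h
    · exfalso
      have h3 := hcomms s k h
      rw [hs2, mul_one] at h3
      have h4 : s * k = 1 * k := by rw [one_mul]; exact h3
      exact hs1 (mul_right_cancel h4)
  have hσmn : σ (m * n) = 1 := by rw [hhom, hm, hn, mul_one]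
  have hmn_ne : m * n ≠ n * m := by
    intro hc
    apply hs1
    calc s = m⁻¹ * n⁻¹ * m * n := hmn.symm
    _ = m⁻¹ * (n⁻¹ * (m * n)) := by simp [mul_assoc]
    _ = m⁻¹ * (n⁻¹ * (n * m)) := by rw [hc]
    _ = 1 := by simp
  have hstm : st m = s * m := (hcanon m hm).2 (fun H => hmn_ne (H n hn))
  have hstn : st n = s * n := (hcanon n hn).2 (fun H => hmn_ne ((H m hm).symm))
  have hnm : n * m = s * (m * n) := by
    have h := hcomms m n hmn   -- m * n = n * (m * s)
    have h3 := congrArg (fun z => z * s) h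
    simp only [mul_assoc, hs2, mul_one] at h3  -- hopefully : m * (n * s) = n * m
    calc n * m = m * (n * s) := h3.symm
    _ = m * (s * n) := by rw [← hscent n hn]
    _ = (m * s) * n := by rw [mul_assoc]
    _ = (s * m) * n := by rw [hscent m hm]
    _ = s * (m * n) := by rw [mul_assoc]
  have hstmn : st (m * n) = s * (m * n) := by
    rw [hanti, hstn, hstm]
    calc (s * n) * (s * m) = s * ((n * s) * m) := by simp [mul_assoc]
    _ = s * ((s * n) * m) := by rw [hscent n hn]
    _ = (s * s) * (n * m) := by simp [mul_assoc]
    _ = n * m := by rw [hs2, one_mul]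
    _ = s * (m * n) := hnm
  have P2' : ∀ x g : G, σ x = 1 → σ g = -1 →
      (g * st x = st x * g ∧ x * st g = st g * x) ∨
      (g * st x = x * st g ∧ st x * g = st g * x) :=
    fun x g hx hg => P2lem h2 st σ hnormal x g hx hg
  have P3' : ∀ x y : G, σ x = -1 → σ y = -1 →
      (x * st y = st y * x ∧ y * st x = st x * y) ∨
      (x * st y = st x * y ∧ y * st x = st y * x) :=
    fun x y hx hy => P3lem h2 st σ hnormal x y hx hy
  -- the finishing step: any h0 outside N with st h0 = s * h0 gives the conclusion
  have finisher : ∀ h0 : G, σ h0 = -1 → st h0 = s * h0 →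
      ∃ g₀ : G, σ g₀ = -1 ∧ (∀ k : G, σ k = 1 → g₀ * k = k * g₀) ∧
        st g₀ = s * g₀ ∧ g₀ ∈ Subgroup.center G := by
    intro h0 hσ0 hst0
    have hsts : st s = s := (hcanon s hsN).1 (fun k hk => hscent k hk)
    have hs0 : s * h0 = h0 * s := by
      have h := hinvol h0
      nth_rewrite 1 [hst0] at h   -- st (s * h0) = h0
      rw [hanti, hsts, hst0] at h -- (s*h0)*s = h0
      have h3 := congrArg (fun z => z * s) h
      simp only [mul_assoc, hs2, mul_one] at h3
      exact h3
    have hcommN : ∀ x : G, σ x = 1 → h0 * x = x * h0 := by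
      intro x hx
      by_cases hxc : ∀ k, σ k = 1 → x * k = k * x
      · have hstx : st x = x := (hcanon x hx).1 hxc
        have hσxh : σ (x * h0) = -1 := by rw [hhom, hx, hσ0, one_mul]
        have hstxh : st (x * h0) = s * (h0 * x) := by rw [hanti, hstx, hst0, mul_assoc]
        rcases P3' h0 (x*h0) hσ0 hσxh with ⟨u, _⟩ | ⟨u, _⟩
        · rw [hstxh] at u -- u : h0 * (s*(h0*x)) = (s*(h0*x)) * h0
          have l : s * (h0 * (h0 * x)) = s * (h0 * (x * h0)) := by
            calc s * (h0 * (h0 * x)) = (s * h0) * (h0 * x) := by rw [mul_assoc]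
            _ = (h0 * s) * (h0 * x) := by rw [hs0]
            _ = h0 * (s * (h0 * x)) := by rw [mul_assoc]
            _ = (s * (h0 * x)) * h0 := u
            _ = s * (h0 * (x * h0)) := by simp [mul_assoc]
          exact mul_left_cancel (mul_left_cancel l)
        · rw [hstxh, hst0] at u -- u : h0 * (s*(h0*x)) = (s*h0)*(x*h0)
          have l : s * (h0 * (h0 * x)) = s * (h0 * (x * h0)) := by
            calc s * (h0 * (h0 * x)) = (s * h0) * (h0 * x) := by rw [mul_assoc]
            _ = (h0 * s) * (h0 * x) := by rw [hs0]
            _ = h0 * (s * (h0 * x)) := by rw [mul_assoc]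
            _ = (s * h0) * (x * h0) := u
            _ = s * (h0 * (x * h0)) := by rw [mul_assoc]
          exact mul_left_cancel (mul_left_cancel l)
      · have hstx : st x = s * x := (hcanon x hx).2 hxc
        have hsx : s * x = x * s := hscent x hx
        rcases P2' x h0 hx hσ0 with ⟨_, u⟩ | ⟨_, u⟩
        · rw [hst0] at u -- u : x*(s*h0) = (s*h0)*x
          have l : s * (x * h0) = s * (h0 * x) := by
            calc s * (x * h0) = (s * x) * h0 := by rw [mul_assoc]
            _ = (x * s) * h0 := by rw [hsx]
            _ = x * (s * h0) := by rw [mul_assoc]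
            _ = (s * h0) * x := u
            _ = s * (h0 * x) := by rw [mul_assoc]
          exact (mul_left_cancel l).symm
        · rw [hstx, hst0] at u -- u : (s*x)*h0 = (s*h0)*x
          have l : s * (x * h0) = s * (h0 * x) := by simpa [mul_assoc] using u
          exact (mul_left_cancel l).symm
    refine ⟨h0, hσ0, hcommN, hst0, ?_⟩
    rw [Subgroup.mem_center_iff]
    intro y
    rcases hval y with hy | hy
    · exact (hcommN y hy).symm
    · have hx : σ (y * h0⁻¹) = 1 := by rw [hhom, hy, hσinv h0, hσ0]; norm_num
      have hcy := hcommN _ hx  -- h0 * (y * h0⁻¹) = (y * h0⁻¹) * h0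
      have h3 := congrArg (fun z => z * h0) hcy
      simp only [mul_assoc, inv_mul_cancel, mul_one] at h3
      exact h3.symm
  -- level 2 : from st g = g produce h with st h = s * h
  have level2 : ∀ g : G, σ g = -1 → st g = g → ∃ h : G, σ h = -1 ∧ st h = s * h := by
    intro g hg hstg
    rcases P2' m g hm hg with ⟨u, _⟩ | ⟨u1, u2⟩
    · refine ⟨m*g, by rw [hhom, hm, hg, one_mul], ?_⟩
      rw [hstm] at u
      rw [hanti, hstg, hstm, u, mul_assoc]
    · rcases P2' n g hn hg with ⟨v, _⟩ | ⟨v1, v2⟩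
      · refine ⟨n*g, by rw [hhom, hn, hg, one_mul], ?_⟩
        rw [hstn] at v
        rw [hanti, hstg, hstn, v, mul_assoc]
      · rcases P2' (m*n) g hσmn hg with ⟨w, _⟩ | ⟨w1, _⟩
        · refine ⟨m*n*g, by rw [hhom, hσmn, hg, one_mul], ?_⟩
          rw [hstmn] at w
          rw [hanti, hstg, hstmn, w, mul_assoc]
        · exfalso
          rw [hstmn, hstg] at w1  -- w1 : g * (s*(m*n)) = m*n*g
          rw [hstm, hstg] at u1   -- u1 : g * (s*m) = m*g
          rw [hstn, hstg] at v2   -- v2 : (s*n)*g = g*n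
          have hL : g * (s*(m*n)) = (s*(m*n))*g := by
            calc g * (s*(m*n)) = (g*(s*m))*n := by simp [mul_assoc]
            _ = (m*g)*n := by rw [u1]
            _ = m*(g*n) := by rw [mul_assoc]
            _ = m*((s*n)*g) := by rw [← v2]
            _ = ((m*s)*n)*g := by simp [mul_assoc]
            _ = ((s*m)*n)*g := by rw [hscent m hm]
            _ = (s*(m*n))*g := by rw [mul_assoc s m n]
          rw [w1] at hL  -- hL : m*n*g = (s*(m*n))*g
          have hL2 : m*n = s*(m*n) := mul_right_cancel hL
          have hL3 : (1:G)*(m*n) = s*(m*n) := by rw [one_mul]; exact hL2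
          exact hs1 (mul_right_cancel hL3).symm
  -- level 1 : from any g outside N, produce h with st h = s*h or st h = h
  have level1 : ∀ g : G, σ g = -1 → ∃ h : G, σ h = -1 ∧ (st h = s * h ∨ st h = h) := by
    intro g hg
    have hσc' : σ (st g * g⁻¹) = 1 := by rw [hhom, hσst, hσinv, hg]; norm_num
    obtain ⟨c, hstg, hσc⟩ : ∃ c : G, st g = c * g ∧ σ c = 1 :=
      ⟨st g * g⁻¹, by rw [inv_mul_cancel_right], hσc'⟩
    have hgc : g * c = c * g := by
      have h := P1lem st σ hnormal g (hσne g)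
      rw [hstg] at h
      have h3 : (g*c)*g = (c*g)*g := by rw [mul_assoc]; exact h
      exact mul_right_cancel h3
    have hgcinv : c⁻¹ * g = g * c⁻¹ := by
      have h3 := congrArg (fun z => c⁻¹ * z * c⁻¹) hgc
      simpa [mul_assoc] using h3
    have hstc : st c = c⁻¹ := by
      have h := hinvol g
      nth_rewrite 1 [hstg] at h
      rw [hanti, hstg] at h  -- (c*g) * st c = g
      have h3 := congrArg (fun z => g⁻¹ * (c⁻¹ * z)) h
      simp only [mul_assoc] at h3
      simp only [inv_mul_cancel_left] at h3
      -- h3 : st c = g⁻¹ * (c⁻¹ * g)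
      rw [h3, hgcinv]
      simp
    have hsc : s * c = c * s := hscent c hσc
    have hcc : c * c = 1 ∨ c * c = s := by
      by_cases hZ : ∀ k, σ k = 1 → c * k = k * c
      · left
        have h := (hcanon c hσc).1 hZ; rw [hstc] at h  -- c⁻¹ = c
        nth_rewrite 2 [← h]
        exact mul_inv_cancel c
      · right
        have h := (hcanon c hσc).2 hZ; rw [hstc] at h  -- c⁻¹ = s*c
        have h3 : (1:G) = s*(c*c) := by
          calc (1:G) = c * c⁻¹ := (mul_inv_cancel c).symm
          _ = c*(s*c) := by rw [h]
          _ = (c*s)*c := by rw [mul_assoc]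
          _ = (s*c)*c := by rw [hsc]
          _ = s*(c*c) := by rw [mul_assoc]
        have h4 := congrArg (fun z => s * z) h3
        simp only [mul_one, ← mul_assoc, hs2, one_mul] at h4
        exact h4.symm
    -- the case where the B branch holds for some noncentral x
    have bcase : ∀ x : G, σ x = 1 → st x = s * x → g * st x = x * st g →
        ∃ h : G, σ h = -1 ∧ (st h = s * h ∨ st h = h) := by
      intro x hx hstx bx
      rw [hstx, hstg] at bx  -- bx : g*(s*x) = x*(c*g)
      refine ⟨x*g, by rw [hhom, hx, hg, one_mul], ?_⟩
      have hstxg : st (x*g) = c*(x*(c*g)) := by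
        rw [hanti, hstg, hstx, mul_assoc, bx]
      have hsx : s * x = x * s := hscent x hx
      rcases hNcomm x c hx hσc with hxc | hxc
      · have hxc' : x*c = c*x := hcomm1 x c hxc
        rcases hcc with h4 | h4
        · refine Or.inr ?_
          rw [hstxg]
          calc c*(x*(c*g)) = c*((x*c)*g) := by rw [mul_assoc x c g]
          _ = c*((c*x)*g) := by rw [hxc']
          _ = ((c*c)*x)*g := by simp [mul_assoc]
          _ = x*g := by rw [h4, one_mul]
        · refine Or.inl ?_
          rw [hstxg]
          calc c*(x*(c*g)) = c*((x*c)*g) := by rw [mul_assoc x c g]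
          _ = c*((c*x)*g) := by rw [hxc']
          _ = ((c*c)*x)*g := by simp [mul_assoc]
          _ = (s*x)*g := by rw [h4]
          _ = s*(x*g) := by rw [mul_assoc]
      · have hxc' : x*c = c*(x*s) := hcomms x c hxc
        rcases hcc with h4 | h4
        · refine Or.inl ?_
          rw [hstxg]
          calc c*(x*(c*g)) = c*((x*c)*g) := by rw [mul_assoc x c g]
          _ = c*((c*(x*s))*g) := by rw [hxc']
          _ = ((c*c)*(x*s))*g := by simp [mul_assoc]
          _ = (x*s)*g := by rw [h4, one_mul]
          _ = (s*x)*g := by rw [← hsx]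
          _ = s*(x*g) := by rw [mul_assoc]
        · refine Or.inr ?_
          rw [hstxg]
          calc c*(x*(c*g)) = c*((x*c)*g) := by rw [mul_assoc x c g]
          _ = c*((c*(x*s))*g) := by rw [hxc']
          _ = ((c*c)*(x*s))*g := by simp [mul_assoc]
          _ = (s*(x*s))*g := by rw [h4]
          _ = (s*(s*x))*g := by rw [hsx]
          _ = ((s*s)*x)*g := by simp [mul_assoc]
          _ = x*g := by rw [hs2, one_mul]
    rcases P2' m g hm hg with ⟨a1, _⟩ | ⟨b1, _⟩
    · rcases P2' n g hn hg with ⟨a1', _⟩ | ⟨b1', _⟩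
      · -- A_m and A_n
        rw [hstm] at a1   -- a1 : g*(s*m) = (s*m)*g
        rw [hstn] at a1'  -- a1' : g*(s*n) = (s*n)*g
        have hσng : σ (n*g) = -1 := by rw [hhom, hn, hg, one_mul]
        have hstng : st (n*g) = (c*(s*n))*g := by
          rw [hanti, hstg, hstn, mul_assoc, a1', ← mul_assoc]
        rcases P2' m (n*g) hm hσng with ⟨d1, _⟩ | ⟨d1, _⟩
        · exfalso
          rw [hstm] at d1  -- d1 : (n*g)*(s*m) = (s*m)*(n*g)
          have l : (n*(s*m))*g = ((s*m)*n)*g := by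
            calc (n*(s*m))*g = n*((s*m)*g) := by rw [mul_assoc]
            _ = n*(g*(s*m)) := by rw [a1]
            _ = (n*g)*(s*m) := by rw [mul_assoc]
            _ = (s*m)*(n*g) := d1
            _ = ((s*m)*n)*g := (mul_assoc (s*m) n g).symm
          have l2 : n*(s*m) = (s*m)*n := mul_right_cancel l
          have l3 : m*n = s*(m*n) := by
            calc m*n = (s*s)*(m*n) := by rw [hs2, one_mul]
            _ = s*(s*(m*n)) := by rw [mul_assoc]
            _ = s*(n*m) := by rw [← hnm]
            _ = (s*n)*m := by rw [← mul_assoc]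
            _ = (n*s)*m := by rw [hscent n hn]
            _ = n*(s*m) := by rw [mul_assoc]
            _ = (s*m)*n := l2
            _ = s*(m*n) := by rw [mul_assoc]
          have l4 : (1:G)*(m*n) = s*(m*n) := by rw [one_mul]; exact l3
          exact hs1 (mul_right_cancel l4).symm
        · -- d1 : (n*g)*(st m) = m * st (n*g)
          rw [hstm, hstng] at d1  -- (n*g)*(s*m) = m*((c*(s*n))*g)
          refine ⟨g, hg, Or.inl ?_⟩
          have l : (m*n)*g = (m*(c*(s*n)))*g := by
            calc (m*n)*g = ((s*s)*(m*n))*g := by rw [hs2, one_mul]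
            _ = (s*(s*(m*n)))*g := by rw [mul_assoc s s (m*n)]
            _ = (s*(n*m))*g := by rw [← hnm]
            _ = ((s*n)*m)*g := by rw [← mul_assoc s n m]
            _ = ((n*s)*m)*g := by rw [hscent n hn]
            _ = (n*(s*m))*g := by rw [mul_assoc n s m]
            _ = n*((s*m)*g) := by rw [mul_assoc]
            _ = n*(g*(s*m)) := by rw [a1]
            _ = (n*g)*(s*m) := by rw [mul_assoc]
            _ = m*((c*(s*n))*g) := d1
            _ = (m*(c*(s*n)))*g := (mul_assoc m (c*(s*n)) g).symm
          have l2 : m*n = m*(c*(s*n)) := mul_right_cancel l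
          have l3 : n = c*(s*n) := mul_left_cancel l2
          have l4 : s*n = c*n := by
            calc s*n = s*(c*(s*n)) := by rw [← l3]
            _ = ((s*c)*s)*n := by simp [mul_assoc]
            _ = ((c*s)*s)*n := by rw [hsc]
            _ = c*((s*s)*n) := by simp [mul_assoc]
            _ = c*n := by rw [hs2, one_mul]
          have l5 : s = c := mul_right_cancel l4
          rw [hstg, ← l5]
      · exact bcase n hn hstn b1'
    · exact bcase m hm hstm b1
  -- put everything together
  obtain ⟨g1, hg1⟩ := hnt
  obtain ⟨h, hσh, hsth⟩ := level1 g1 hg1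
  rcases hsth with h1 | h1
  · exact finisher h hσh h1
  · obtain ⟨h', hσh', hsth'⟩ := level2 h hσh h1
    exact finisher h' hσh' hsth'
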